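/- Let P be a partition of a positive integer n and let (P_1, …, P_{r+1}; a_1, …, a_r) be a U-process of length r for P. Then Σ_{i=1}^{r} s(P_i, a_i) = u_r(P), the maximum cardinality of an r-U-chain in D_P. -/

import Mathlib

/-!
Common definitions for the poset `D_P` attached to a partition `P` of `n`,
its `U`-chains, the quantity `s(P,a)` (cardinality of a simple `U`-chain),
and `U`-processes, following Khatami, "The poset of the nilpotent commutator
of a nilpotent matrix".

A partition of `n` is encoded by its multiplicity function `np : ℕ →₀ ℕ`
(`np p` = number of parts equal to `p`), with `np 0 = 0` and `Σ p·np p = n`.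
-/

/-- Vertices are triples `(u, p, k)`. -/
abbrev Vtx : Type := ℕ × ℕ × ℕ

/-- `np` is the multiplicity function of a partition of `n`. -/
def IsPartitionOf (n : ℕ) (np : ℕ →₀ ℕ) : Prop :=
  np 0 = 0 ∧ (np.sum fun p m => p * m) = n

/-- The vertex set of the diagram `D_P`: triples `(u,p,k)` with
`1 ≤ u ≤ p` and `1 ≤ k ≤ np p`. -/
def vertexSet (np : ℕ →₀ ℕ) : Set Vtx :=
  {v | 1 ≤ v.1 ∧ v.1 ≤ v.2.1 ∧ 1 ≤ v.2.2 ∧ v.2.2 ≤ np v.2.1}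

/-- The set `S_i` for the value `a`:
`S_i = {(u,p,k) : p ∈ {a, a+1}, i ≤ u ≤ p−i+1} ∪ {(u,p,k) : p > a+1, u ∈ {i, p−i+1}}`,
a subset of the vertex set of `D_P`.  (The condition `u ≤ p - i + 1` is written
as `u + i ≤ p + 1` to avoid truncated subtraction.) -/
def Sset (np : ℕ →₀ ℕ) (i a : ℕ) : Set Vtx :=
  {v ∈ vertexSet np |
    ((v.2.1 = a ∨ v.2.1 = a + 1) ∧ i ≤ v.1 ∧ v.1 + i ≤ v.2.1 + 1) ∨
    (a + 1 < v.2.1 ∧ (v.1 = i ∨ v.1 + i = v.2.1 + 1))}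

/-- The `r`-`U`-chain `U_{b 1, …, b r} = S_1 ∪ ⋯ ∪ S_r` in `D_P`. -/
def UChain (np : ℕ →₀ ℕ) (b : ℕ → ℕ) (r : ℕ) : Set Vtx :=
  ⋃ i ∈ Set.Icc 1 r, Sset np i (b i)

/-- `b 1 < b 2 < ⋯ < b r` are positive with consecutive differences at least `2`. -/
def ValidSeq (b : ℕ → ℕ) (r : ℕ) : Prop :=
  (∀ i, 1 ≤ i → i ≤ r → 1 ≤ b i) ∧ ∀ i, 1 ≤ i → i < r → b i + 2 ≤ b (i + 1)

/-- `s(P,a) = a·n_a + (a+1)·n_{a+1} + 2·Σ_{p>a+1} n_p`, the cardinality of the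
simple `U`-chain `U_a` in `D_P`. -/
def sVal (np : ℕ →₀ ℕ) (a : ℕ) : ℕ :=
  a * np a + (a + 1) * np (a + 1) +
    2 * ∑ p ∈ np.support.filter (fun p => a + 1 < p), np p

/-- `a` is optimal for `P`: `U_a` is a maximum simple `U`-chain in `D_P`. -/
def OptimalFor (np : ℕ →₀ ℕ) (a : ℕ) : Prop :=
  1 ≤ a ∧ ∀ c, 1 ≤ c → sVal np c ≤ sVal np a

/-- `p` is a part of the partition with multiplicity function `np`. -/
def IsPart (np : ℕ →₀ ℕ) (p : ℕ) : Prop := 0 < p ∧ 0 < np p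

/-- The covering relation of the poset `D_P`:  `Cov np x y` means `y` covers `x`.
(i)  for consecutive parts `q < p` and `1 ≤ u ≤ q`, `(u, p, np p)` is covered by `(u, q, 1)`;
(ii) for consecutive parts `p < q` and `1 ≤ u ≤ p`, `(u, p, np p)` is covered by
     `(u + q − p, q, 1)`;
(iii) for a part `p`, `1 ≤ u ≤ p`, `1 ≤ k < np p`, `(u,p,k)` is covered by `(u,p,k+1)`;
(iv) for an isolated part `p` (neither `p−1` nor `p+1` is a part) and `1 ≤ u < p`,
     `(u, p, np p)` is covered by `(u+1, p, 1)`. -/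
def Cov (np : ℕ →₀ ℕ) (x y : Vtx) : Prop :=
  (∃ p q u, IsPart np p ∧ IsPart np q ∧ q < p ∧
      (∀ t, q < t → t < p → ¬ IsPart np t) ∧
      1 ≤ u ∧ u ≤ q ∧ x = (u, p, np p) ∧ y = (u, q, 1)) ∨
  (∃ p q u, IsPart np p ∧ IsPart np q ∧ p < q ∧
      (∀ t, p < t → t < q → ¬ IsPart np t) ∧
      1 ≤ u ∧ u ≤ p ∧ x = (u, p, np p) ∧ y = (u + (q - p), q, 1)) ∨
  (∃ p u k, IsPart np p ∧ 1 ≤ u ∧ u ≤ p ∧ 1 ≤ k ∧ k < np p ∧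
      x = (u, p, k) ∧ y = (u, p, k + 1)) ∨
  (∃ p u, IsPart np p ∧ ¬ IsPart np (p - 1) ∧ ¬ IsPart np (p + 1) ∧
      1 ≤ u ∧ u < p ∧ x = (u, p, np p) ∧ y = (u + 1, p, 1))

/-- The partial order of `D_P`: reflexive–transitive closure of the covering relation. -/
def leD (np : ℕ →₀ ℕ) : Vtx → Vtx → Prop := Relation.ReflTransGen (Cov np)

/-- A chain in `D_P`: a subset of the vertex set that is totally ordered by `leD`. -/
def IsChainD (np : ℕ →₀ ℕ) (C : Set Vtx) : Prop :=
  C ⊆ vertexSet np ∧ ∀ x ∈ C, ∀ y ∈ C, leD np x y ∨ leD np y x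

/-- `u_r(P)`: the maximum cardinality of an `r`-`U`-chain in `D_P`. -/
noncomputable def uMax (np : ℕ →₀ ℕ) (r : ℕ) : ℕ :=
  sSup {m | ∃ b : ℕ → ℕ, ValidSeq b r ∧ (UChain np b r).ncard = m}

/-- The relabeling injection `ι : D_{P'} → D_P` attached to removing `U_a`. -/
def iotaMap (a : ℕ) (v : Vtx) : Vtx :=
  if v.2.1 < a then v else (v.1 + 1, v.2.1 + 2, v.2.2)

/-- `iotaComp aa i = ι_1 ∘ ⋯ ∘ ι_i`, where `ι_j` is the relabeling map for `aa j`. -/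
def iotaComp (aa : ℕ → ℕ) : ℕ → Vtx → Vtx
  | 0 => id
  | i + 1 => iotaComp aa i ∘ iotaMap (aa (i + 1))

/-- `(P_1, …, P_{r+1}; a_1, …, a_r)` is a `U`-process of length `r` for `P`:
`P_1 = P`, each `a_i` is optimal for `P_i`, and `P_{i+1}` is obtained from `P_i`
by deleting the parts equal to `a_i` or `a_i + 1` and decreasing by `2` every
part greater than `a_i + 1`. -/
def IsUProcess (r : ℕ) (np : ℕ →₀ ℕ) (Ps : ℕ → ℕ →₀ ℕ) (aa : ℕ → ℕ) : Prop :=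
  Ps 1 = np ∧
    ∀ i, 1 ≤ i → i ≤ r →
      OptimalFor (Ps i) (aa i) ∧
        ∀ m, Ps (i + 1) m = if m < aa i then Ps i m else Ps i (m + 2)

/-- The subset `C_i = (ι_1 ∘ ⋯ ∘ ι_{i−1})(U_{a_i}) ⊆ D_P` of a `U`-process. -/
def Cset (Ps : ℕ → ℕ →₀ ℕ) (aa : ℕ → ℕ) (i : ℕ) : Set Vtx :=
  iotaComp aa (i - 1) '' Sset (Ps i) 1 (aa i)


/-! ### Auxiliary development -/

/-- Tail sum `Σ_{p>a+1} n_p`. -/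
def TV (np : ℕ →₀ ℕ) (a : ℕ) : ℕ := ∑ p ∈ np.support.filter (fun p => a + 1 < p), np p

lemma sVal_eq (np : ℕ →₀ ℕ) (a : ℕ) :
    sVal np a = a * np a + (a + 1) * np (a + 1) + 2 * TV np a := rfl

/-- `|S_i|` for value `a` (when `2i ≤ a+1`). -/
def wVal (np : ℕ →₀ ℕ) (i a : ℕ) : ℕ :=
  (a + 2 - 2*i) * np a + (a + 3 - 2*i) * np (a + 1) + 2 * TV np a

def FVal (np : ℕ →₀ ℕ) (b : ℕ → ℕ) (r : ℕ) : ℕ :=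
  ∑ i ∈ Finset.Icc 1 r, wVal np i (b i)

lemma wVal_one (np : ℕ →₀ ℕ) (a : ℕ) : wVal np 1 a = sVal np a := by
  simp [wVal, sVal_eq]

lemma ValidSeq.ge {b : ℕ → ℕ} {r : ℕ} (h : ValidSeq b r) {i j : ℕ}
    (h1 : 1 ≤ i) (hij : i ≤ j) (hj : j ≤ r) : b i + 2*(j - i) ≤ b j := by
  obtain ⟨hpos, hstep⟩ := h
  induction j with
  | zero => omega
  | succ j ih =>
    rcases Nat.eq_or_lt_of_le hij with h | h
    · subst h; simp
    · have hj' : j ≤ r := by omega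
      have h1' := ih (by omega) hj'
      have h2' := hstep j (by omega) (by omega)
      omega

lemma ValidSeq.lb {b : ℕ → ℕ} {r : ℕ} (h : ValidSeq b r) {i : ℕ}
    (h1 : 1 ≤ i) (hi : i ≤ r) : 2*i - 1 ≤ b i := by
  have := h.ge (le_refl 1) h1 hi
  have := h.1 1 le_rfl (by omega)
  omega

lemma TV_eq_sum_Ioc (np : ℕ →₀ ℕ) (a M : ℕ) (hM : ∀ m, M < m → np m = 0) :
    TV np a = ∑ p ∈ Finset.Ioc (a+1) M, np p := by
  unfold TV
  apply Finset.sum_subset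
  · intro p hp
    simp only [Finset.mem_filter, Finsupp.mem_support_iff] at hp
    simp only [Finset.mem_Ioc]
    refine ⟨hp.2, ?_⟩
    by_contra h
    exact hp.1 (hM p (by omega))
  · intro p hp hnp
    simp only [Finset.mem_Ioc] at hp
    simp only [Finset.mem_filter, Finsupp.mem_support_iff] at hnp
    by_contra h
    exact hnp ⟨h, hp.1⟩

lemma TV_split (np : ℕ →₀ ℕ) {a d : ℕ} (had : a ≤ d) :
    TV np a = (∑ p ∈ Finset.Ioc (a+1) (d+1), np p) + TV np d := by
  set M := max (np.support.sup id) (d+1) with hMdef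
  have hM : ∀ m, M < m → np m = 0 := by
    intro m hm
    by_contra h
    have : m ∈ np.support := Finsupp.mem_support_iff.mpr h
    have : m ≤ np.support.sup id := Finset.le_sup (f := id) this
    omega
  rw [TV_eq_sum_Ioc np a M hM, TV_eq_sum_Ioc np d M hM]
  rw [← Finset.sum_Ioc_consecutive _ (by omega : a+1 ≤ d+1) (by omega : d+1 ≤ M)]

lemma TV_step (Q : ℕ →₀ ℕ) (e : ℕ) : TV Q e = Q (e+2) + TV Q (e+1) := by
  have h := TV_split Q (show e ≤ e + 1 by omega)
  rw [h]
  have : Finset.Ioc (e+1) (e+2) = {e+2} := by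
    ext x; simp only [Finset.mem_Ioc, Finset.mem_singleton]; omega
  rw [this, Finset.sum_singleton]

lemma sstep (Q : ℕ →₀ ℕ) (e : ℕ) :
    (sVal Q (e+1) : ℤ) - sVal Q e = e * ((Q (e+2) : ℤ) - Q e) := by
  rw [sVal_eq, sVal_eq, TV_step Q e]
  push_cast
  ring

section derivedTV
variable (Q Q' : ℕ →₀ ℕ) (a : ℕ) (hder : ∀ m, Q' m = if m < a then Q m else Q (m+2))

include hder

lemma TV_shift {c : ℕ} (hc : a ≤ c + 2) : TV Q' c = TV Q (c+2) := by
  set M0 := Q.support.sup id with hM0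
  have hQ0 : ∀ m, M0 < m → Q m = 0 := by
    intro m hm; by_contra h
    have : m ≤ M0 := Finset.le_sup (f := id) (Finsupp.mem_support_iff.mpr h)
    omega
  have hQ'0 : ∀ m, M0 + c + 2 < m → Q' m = 0 := by
    intro m hm; rw [hder m]; split <;> [exact hQ0 m (by omega); exact hQ0 _ (by omega)]
  rw [TV_eq_sum_Ioc Q' c (M0 + c + 2) hQ'0, TV_eq_sum_Ioc Q (c+2) (M0 + c + 4) (fun m hm => hQ0 m (by omega))]
  have hmap : (Finset.Ioc (c+1) (M0+c+2)).map (addRightEmbedding 2) = Finset.Ioc (c+3) (M0+c+4) := by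
    rw [Finset.map_add_right_Ioc]
  rw [← hmap, Finset.sum_map]
  apply Finset.sum_congr rfl
  intro p hp
  simp only [Finset.mem_Ioc] at hp
  simp only [addRightEmbedding_apply]
  rw [hder p]
  rw [if_neg (by omega)]

lemma TV_lower {c : ℕ} (hc : c + 2 ≤ a) : TV Q c = TV Q' c + (Q a + Q (a+1)) := by
  have h1 : TV Q c = (∑ p ∈ Finset.Ioc (c+1) (a+1), Q p) + TV Q a := TV_split Q (d := a) (by omega)
  have h2 : TV Q' c = (∑ p ∈ Finset.Ioc (c+1) (a-1), Q' p) + TV Q' (a-2) := by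
    have := TV_split Q' (d := a - 2) (show c ≤ a - 2 by omega)
    rwa [show a - 2 + 1 = a - 1 by omega] at this
  have h3 : TV Q' (a-2) = TV Q a := by
    have := TV_shift Q Q' a hder (c := a - 2) (by omega)
    rwa [show a - 2 + 2 = a by omega] at this
  have h4 : ∑ p ∈ Finset.Ioc (c+1) (a-1), Q' p = ∑ p ∈ Finset.Ioc (c+1) (a-1), Q p := by
    apply Finset.sum_congr rfl
    intro p hp
    simp only [Finset.mem_Ioc] at hp
    rw [hder p, if_pos (by omega)]
  have h5 : (∑ p ∈ Finset.Ioc (c+1) (a+1), Q p)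
      = (∑ p ∈ Finset.Ioc (c+1) (a-1), Q p) + ∑ p ∈ Finset.Ioc (a-1) (a+1), Q p :=
    (Finset.sum_Ioc_consecutive _ (by omega) (by omega)).symm
  have h6 : Finset.Ioc (a-1) (a+1) = {a, a+1} := by
    ext x; simp only [Finset.mem_Ioc, Finset.mem_insert, Finset.mem_singleton]; omega
  have h7 : ∑ p ∈ Finset.Ioc (a-1) (a+1), Q p = Q a + Q (a+1) := by
    rw [h6, Finset.sum_pair (by omega)]
  omega

end derivedTV

section star
variable (Q : ℕ →₀ ℕ) (a : ℕ)
  (hopt : ∀ c, 1 ≤ c → sVal Q c ≤ sVal Q a) (ha : 1 ≤ a)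

include hopt ha

lemma star {j c : ℕ} (hc1 : 2*j+1 ≤ c) (hca : c ≤ a+1) (hja : 2*j ≤ a) :
    (sVal Q c : ℤ) - 2*j*((Q c : ℤ) + Q (c+1)) ≤ (sVal Q a : ℤ) - 2*j*((Q a : ℤ) + Q (a+1)) := by
  have hQa2 : (Q (a+2) : ℤ) ≤ Q a := by
    have h1 : (sVal Q (a+1) : ℤ) ≤ sVal Q a := by exact_mod_cast hopt (a+1) (by omega)
    have h2 := sstep Q a
    have ha' : (1:ℤ) ≤ (a:ℤ) := by exact_mod_cast ha
    nlinarith [h1, h2, ha']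
  rcases Nat.lt_or_ge a c with hgt | hle
  · have hc : c = a + 1 := by omega
    subst hc
    have hst := sstep Q a
    have h2j : (2*(j:ℤ) - a) ≤ 0 := by
      have : (2*(j:ℤ)) ≤ a := by exact_mod_cast hja
      linarith
    have hprod : (0:ℤ) ≤ (2*(j:ℤ) - a) * ((Q (a+2) : ℤ) - Q a) := by
      have := mul_nonneg (neg_nonneg.mpr h2j) (neg_nonneg.mpr (by linarith : ((Q (a+2) : ℤ) - Q a) ≤ 0))
      nlinarith [this]
    have : ((a:ℕ)+1+1) = a+2 := rfl
    rw [this]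
    linarith [hst, hprod]
  · have key : ∀ d c', c' + d = a → 2*j+1 ≤ c' →
        ((c':ℤ) - 2*j) * ((sVal Q a : ℤ) - sVal Q c')
          ≤ (c' : ℤ) * (((sVal Q a : ℤ) - 2*j*((Q a : ℤ) + Q (a+1)))
              - ((sVal Q c' : ℤ) - 2*j*((Q c' : ℤ) + Q (c'+1)))) := by
      intro d
      induction d with
      | zero => intro c' h1 h2; have hce : c' = a := by omega
                subst hce; simp
      | succ d ih =>
        intro c' h1 h2
        have hIH := ih (c'+1) (by omega) (by omega)
        have hX : (0:ℤ) ≤ (sVal Q a : ℤ) - sVal Q (c'+1) := by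
          have : (sVal Q (c'+1) : ℤ) ≤ sVal Q a := by exact_mod_cast hopt (c'+1) (by omega)
          linarith
        have hss := sstep Q c'
        push_cast at hIH
        set A := (sVal Q a : ℤ) - 2*j*((Q a : ℤ) + Q (a+1)) with hA
        set B := (sVal Q (c'+1) : ℤ) - 2*j*((Q (c'+1) : ℤ) + Q (c'+1+1)) with hB
        set C := (sVal Q c' : ℤ) - 2*j*((Q c' : ℤ) + Q (c'+1)) with hC
        have hst : B - C = ((c':ℤ) - 2*j) * ((Q (c'+2) : ℤ) - Q c') := by
          simp only [hB, hC]
          push_cast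
          linarith [hss]
        have step2 : ((c':ℤ) - 2*j) * ((sVal Q a : ℤ) - sVal Q (c'+1))
            ≤ (c' : ℤ) * (A - B) := by
          have hpos : (0:ℤ) < (c' : ℤ) + 1 := by positivity
          have m1 : ((c':ℤ)) * ((((c':ℤ)+1) - 2*j) * ((sVal Q a : ℤ) - sVal Q (c'+1)))
              ≤ ((c':ℤ)) * (((c':ℤ)+1) * (A - B)) := by
            apply mul_le_mul_of_nonneg_left _ (by positivity)
            linarith [hIH]
          have m2 : ((c':ℤ)+1) * (((c':ℤ) - 2*j) * ((sVal Q a : ℤ) - sVal Q (c'+1)))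
              ≤ ((c':ℤ)) * ((((c':ℤ)+1) - 2*j) * ((sVal Q a : ℤ) - sVal Q (c'+1))) := by
            nlinarith [hX, (by positivity : (0:ℤ) ≤ 2*(j:ℤ))]
          have m3 : ((c':ℤ)+1) * (((c':ℤ) - 2*j) * ((sVal Q a : ℤ) - sVal Q (c'+1)))
              ≤ ((c':ℤ)+1) * ((c' : ℤ) * (A - B)) := by
            calc _ ≤ ((c':ℤ)) * (((c':ℤ)+1) * (A - B)) := le_trans m2 m1
            _ = ((c':ℤ)+1) * ((c' : ℤ) * (A - B)) := by ring
          exact le_of_mul_le_mul_left m3 hpos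
        have e1 : (c':ℤ) * (B - C) = (c':ℤ) * (((c':ℤ) - 2*j) * ((Q (c'+2) : ℤ) - Q c')) := by
          rw [hst]
        have e2 : ((c':ℤ) - 2*j) * ((sVal Q (c'+1) : ℤ) - sVal Q c')
            = ((c':ℤ) - 2*j) * ((c':ℤ) * ((Q (c'+2) : ℤ) - Q c')) := by rw [hss]
        linarith [step2, e1, e2]
    have hk := key (a - c) c (by omega) hc1
    have hsc : (0:ℤ) ≤ (sVal Q a : ℤ) - sVal Q c := by
      have : (sVal Q c : ℤ) ≤ sVal Q a := by exact_mod_cast hopt c (by omega)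
      linarith
    have h1 : (0:ℤ) ≤ ((c:ℤ) - 2*j) * ((sVal Q a : ℤ) - sVal Q c) := by
      apply mul_nonneg _ hsc
      have : (2*(j:ℤ)+1) ≤ c := by exact_mod_cast hc1
      linarith
    have h2 := le_trans h1 hk
    have hcpos : (0:ℤ) < (c:ℤ) := by exact_mod_cast (by omega : 0 < c)
    have h3 := (mul_le_mul_iff_right₀ hcpos).mp (by linarith [h2] : (c:ℤ) * 0 ≤ (c:ℤ) *
      (((sVal Q a : ℤ) - 2*j*((Q a : ℤ) + Q (a+1)))
        - ((sVal Q c : ℤ) - 2*j*((Q c : ℤ) + Q (c+1)))))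
    linarith [h3]

end star

section Elemmas
variable (Q Q' : ℕ →₀ ℕ) (a : ℕ) (hder : ∀ m, Q' m = if m < a then Q m else Q (m+2))

include hder

lemma lemE1 {i c : ℕ} (hc : a ≤ c) (hi2 : 2*i ≤ c + 1) :
    wVal Q' i c = wVal Q (i+1) (c+2) := by
  unfold wVal
  rw [hder c, if_neg (by omega), hder (c+1), if_neg (by omega),
    TV_shift Q Q' a hder (by omega)]
  rw [show c + 2 + 2 - 2*(i+1) = c + 2 - 2*i by omega,
    show c + 2 + 3 - 2*(i+1) = c + 3 - 2*i by omega,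
    show c + 1 + 2 = c + 3 by omega, show c + 2 + 1 = c + 3 by omega]

lemma lemE2 {i c : ℕ} (hc : c + 2 ≤ a) (hi2 : 2*i ≤ c + 1) :
    wVal Q i c = wVal Q' i c + 2*(Q a + Q (a+1)) := by
  unfold wVal
  rw [hder c, if_pos (by omega), hder (c+1), if_pos (by omega),
    TV_lower Q Q' a hder hc]
  ring

omit hder in
lemma lemEwA {i : ℕ} (hi : 1 ≤ i) (hia : 2*i ≤ a + 1) :
    wVal Q i a + 2*(i-1)*(Q a + Q (a+1)) = sVal Q a := by
  obtain ⟨d, rfl⟩ : ∃ d, i = d + 1 := ⟨i - 1, by omega⟩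
  obtain ⟨e, rfl⟩ : ∃ e, a = 2*d + 1 + e := ⟨a - (2*d + 1), by omega⟩
  rw [sVal_eq]
  unfold wVal
  rw [show 2*d+1+e + 2 - 2*(d+1) = e + 1 by omega,
    show 2*d+1+e + 3 - 2*(d+1) = e + 2 by omega,
    show d + 1 - 1 = d by omega]
  ring

lemma lemE4 {i : ℕ} (hi : 1 ≤ i) (hia : 2*i ≤ a) :
    wVal Q i (a-1) + wVal Q (i+1) (a+1) + 2*(i-1)*(Q a + Q (a+1))
      = wVal Q' i (a-1) + sVal Q a := by
  obtain ⟨d, rfl⟩ : ∃ d, i = d + 1 := ⟨i - 1, by omega⟩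
  obtain ⟨m, rfl⟩ : ∃ m, a = m + 2 := ⟨a - 2, by omega⟩
  obtain ⟨e, rfl⟩ : ∃ e, m = 2*d + e := ⟨m - 2*d, by omega⟩
  rw [show 2*d + e + 2 - 1 = 2*d+e+1 by omega]
  rw [sVal_eq]
  unfold wVal
  rw [hder (2*d+e+1), if_pos (by omega), hder (2*d+e+1+1), if_neg (by omega),
    TV_shift Q Q' (2*d+e+2) hder (c := 2*d+e+1) (by omega)]
  rw [TV_step Q (2*d+e+1), TV_step Q (2*d+e+2)]
  rw [show 2*d+e+1+1 = 2*d+e+2 by omega, show 2*d+e+1+2 = 2*d+e+3 by omega,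
    show 2*d+e+1+3 = 2*d+e+4 by omega,
    show 2*d+e+2+1 = 2*d+e+3 by omega, show 2*d+e+2+2 = 2*d+e+4 by omega,
    show 2*d+e+1+1+2 = 2*d+e+4 by omega]
  rw [show 2*d+e+1 + 2 - 2*(d+1) = e + 1 by omega,
    show 2*d+e+1 + 3 - 2*(d+1) = e + 2 by omega,
    show 2*d+e+2 + 1 + 2 - 2*(d+1+1) = e + 1 by omega,
    show 2*d+e+2 + 1 + 3 - 2*(d+1+1) = e + 2 by omega,
    show d + 1 - 1 = d by omega]
  ring

omit hder in
lemma star_w (hopt : ∀ c, 1 ≤ c → sVal Q c ≤ sVal Q a) (ha : 1 ≤ a) {t c : ℕ}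
    (ht : 1 ≤ t) (hc1 : 2*t - 1 ≤ c) (hca : c ≤ a + 1) (hta : 2*(t-1) ≤ a) :
    wVal Q t c + 2*(t-1)*(Q a + Q (a+1)) ≤ sVal Q a := by
  have hs := star Q a hopt ha (j := t-1) (c := c) (by omega) hca (by omega)
  have hcast : (wVal Q t c : ℤ) + 2*((t:ℤ)-1)*(Q c + Q (c+1)) = sVal Q c := by
    rw [sVal_eq]
    unfold wVal
    push_cast [show 2*t ≤ c + 2 by omega, show 2*t ≤ c + 3 by omega]
    ring
  have ht' : ((t:ℤ) - 1) = ((t-1 : ℕ) : ℤ) := by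
    push_cast [ht]; ring
  rw [ht'] at hcast
  have : (wVal Q t c : ℤ) + 2*((t-1:ℕ):ℤ)*(Q a + Q (a+1)) ≤ sVal Q a := by
    rw [← ht'] at hcast hs ⊢
    linarith [hs, hcast]
  exact_mod_cast this

end Elemmas

/-! ### Counting -/

def uSet (i a p : ℕ) : Finset ℕ :=
  if p = a ∨ p = a + 1 then Finset.Icc i (p + 1 - i)
  else if a + 1 < p then {i, p + 1 - i} else ∅

def Fset (np : ℕ →₀ ℕ) (i a : ℕ) : Finset Vtx :=
  np.support.biUnion (fun p =>
    ((uSet i a p) ×ˢ (Finset.Icc 1 (np p))).image (fun uk => (uk.1, p, uk.2)))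

lemma mem_Fset (np : ℕ →₀ ℕ) (i a : ℕ) (v : Vtx) :
    v ∈ Fset np i a ↔ np v.2.1 ≠ 0 ∧ v.1 ∈ uSet i a v.2.1 ∧ 1 ≤ v.2.2 ∧ v.2.2 ≤ np v.2.1 := by
  obtain ⟨u, p, k⟩ := v
  simp only [Fset, Finset.mem_biUnion, Finset.mem_image, Finset.mem_product, Finset.mem_Icc,
    Finsupp.mem_support_iff, Prod.mk.injEq, Prod.exists]
  constructor
  · rintro ⟨q, hq, u', k', ⟨hu', hk1, hk2⟩, rfl, rfl, rfl⟩
    exact ⟨hq, hu', hk1, hk2⟩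
  · rintro ⟨h1, h2, h3, h4⟩
    exact ⟨p, h1, u, k, ⟨h2, h3, h4⟩, rfl, rfl, rfl⟩

lemma Sset_eq_Fset (np : ℕ →₀ ℕ) {i a : ℕ} (hi : 1 ≤ i) (hia : 2*i ≤ a + 1) :
    Sset np i a = ↑(Fset np i a) := by
  ext v
  obtain ⟨u, p, k⟩ := v
  simp only [Finset.coe_sort_coe, Finset.mem_coe, mem_Fset, Sset, vertexSet, Set.mem_setOf_eq,
    Set.mem_sep_iff]
  constructor
  · rintro ⟨⟨hu1, hup, hk1, hk2⟩, hcond⟩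
    refine ⟨by omega, ?_, hk1, hk2⟩
    unfold uSet
    rcases hcond with ⟨hp, hu⟩ | ⟨hp, hu⟩
    · rw [if_pos hp]
      simp only [Finset.mem_Icc]
      omega
    · rw [if_neg (by omega), if_pos hp]
      simp only [Finset.mem_insert, Finset.mem_singleton]
      omega
  · rintro ⟨h1, h2, h3, h4⟩
    unfold uSet at h2
    by_cases hp : p = a ∨ p = a + 1
    · rw [if_pos hp] at h2
      simp only [Finset.mem_Icc] at h2
      exact ⟨⟨by omega, by omega, h3, h4⟩, Or.inl ⟨hp, by omega, by omega⟩⟩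
    · rw [if_neg hp] at h2
      by_cases hp2 : a + 1 < p
      · rw [if_pos hp2] at h2
        simp only [Finset.mem_insert, Finset.mem_singleton] at h2
        exact ⟨⟨by omega, by omega, h3, h4⟩, Or.inr ⟨hp2, by omega⟩⟩
      · rw [if_neg hp2] at h2
        exact absurd h2 (Finset.notMem_empty u)

lemma Fset_card (np : ℕ →₀ ℕ) {i a : ℕ} (hi : 1 ≤ i) (hia : 2*i ≤ a + 1) :
    (Fset np i a).card = wVal np i a := by
  unfold Fset
  rw [Finset.card_biUnion]
  · have hterm : ∀ p ∈ np.support,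
        (((uSet i a p) ×ˢ (Finset.Icc 1 (np p))).image (fun uk : ℕ × ℕ => (uk.1, p, uk.2))).card
          = (uSet i a p).card * np p := by
      intro p _
      have hinj : Function.Injective (fun uk : ℕ × ℕ => ((uk.1, p, uk.2) : Vtx)) := by
        intro x y h
        simpa [Prod.ext_iff] using h
      rw [Finset.card_image_of_injective _ hinj, Finset.card_product, Nat.card_Icc]
      simp
    rw [Finset.sum_congr rfl hterm]
    have hcard : ∀ p, (uSet i a p).card * np p
        = (if p = a then (a + 2 - 2*i) * np p else 0)
          + (if p = a + 1 then (a + 3 - 2*i) * np p else 0)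
          + (if a + 1 < p then 2 * np p else 0) := by
      intro p
      unfold uSet
      by_cases h1 : p = a ∨ p = a + 1
      · rw [if_pos h1, Nat.card_Icc]
        rcases h1 with rfl | h
        · rw [if_pos rfl, if_neg (by omega), if_neg (by omega)]
          rw [show p + 1 - i + 1 - i = p + 2 - 2*i by omega]
          omega
        · subst h
          rw [if_neg (by omega), if_pos rfl, if_neg (by omega)]
          rw [show a + 1 + 1 - i + 1 - i = a + 3 - 2*i by omega]
          omega
      · rw [if_neg h1]
        push_neg at h1
        by_cases h2 : a + 1 < p
        · rw [if_pos h2, if_neg h1.1, if_neg h1.2, if_pos h2]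
          rw [Finset.card_insert_of_notMem (by simp only [Finset.mem_singleton]; omega),
            Finset.card_singleton]
          omega
        · rw [if_neg h2, if_neg h1.1, if_neg h1.2, if_neg h2]
          simp
    rw [Finset.sum_congr rfl (fun p _ => hcard p)]
    rw [Finset.sum_add_distrib, Finset.sum_add_distrib]
    rw [Finset.sum_ite_eq' np.support a (fun p => (a + 2 - 2*i) * np p)]
    rw [Finset.sum_ite_eq' np.support (a+1) (fun p => (a + 3 - 2*i) * np p)]
    rw [← Finset.sum_filter]
    unfold wVal TV
    rw [Finset.mul_sum]
    have e1 : (if a ∈ np.support then (a + 2 - 2*i) * np a else 0) = (a + 2 - 2*i) * np a := by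
      split
      · rfl
      · next h => rw [Finsupp.notMem_support_iff.mp h]; ring
    have e2 : (if a + 1 ∈ np.support then (a + 3 - 2*i) * np (a+1) else 0)
        = (a + 3 - 2*i) * np (a+1) := by
      split
      · rfl
      · next h => rw [Finsupp.notMem_support_iff.mp h]; ring
    rw [e1, e2]
  · intro p hp q hq hpq
    simp only [Finset.disjoint_left]
    intro v hv hv2
    simp only [Finset.mem_image, Prod.exists] at hv hv2
    obtain ⟨u1, k1, _, rfl⟩ := hv
    obtain ⟨u2, k2, _, h⟩ := hv2
    have h2 : q = p := by
      have := congrArg (fun v : Vtx => v.2.1) h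
      simpa using this
    exact hpq h2.symm

lemma Sset_disjoint (np : ℕ →₀ ℕ) {i j bi bj : ℕ} (hi : 1 ≤ i) (hij : i < j)
    (hbi : 2*i ≤ bi + 1) (hbj : 2*j ≤ bj + 1) (hb : bi + 2*(j - i) ≤ bj) :
    Disjoint (Sset np i bi) (Sset np j bj) := by
  rw [Set.disjoint_left]
  rintro ⟨u, p, k⟩ h1 h2
  simp only [Sset, vertexSet, Set.mem_setOf_eq, Set.mem_sep_iff] at h1 h2
  obtain ⟨⟨hu1, hup, hk1, hk2⟩, hc1⟩ := h1
  obtain ⟨-, hc2⟩ := h2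
  rcases hc2 with ⟨hp2, hu2⟩ | ⟨hp2, hu2⟩ <;>
  · have hpbig : bi + 1 < p := by omega
    rcases hc1 with ⟨hp1, _⟩ | ⟨_, hu1'⟩
    · omega
    · omega

lemma UChain_ncard (np : ℕ →₀ ℕ) {b : ℕ → ℕ} {r : ℕ} (hv : ValidSeq b r) :
    (UChain np b r).ncard = FVal np b r := by
  have hbnd : ∀ i, 1 ≤ i → i ≤ r → 2*i ≤ b i + 1 := by
    intro i h1 h2
    have := hv.lb h1 h2
    have := hv.1 i h1 h2
    omega
  have hU : UChain np b r = ↑((Finset.Icc 1 r).biUnion (fun i => Fset np i (b i))) := by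
    ext v
    simp only [UChain, Set.mem_iUnion, Set.mem_Icc, Finset.mem_coe, Finset.mem_biUnion,
      Finset.mem_Icc, exists_prop]
    constructor
    · rintro ⟨i, hi, hvi⟩
      refine ⟨i, hi, ?_⟩
      rw [Sset_eq_Fset np hi.1 (hbnd i hi.1 hi.2)] at hvi
      exact hvi
    · rintro ⟨i, hi, hvi⟩
      refine ⟨i, hi, ?_⟩
      rw [Sset_eq_Fset np hi.1 (hbnd i hi.1 hi.2)]
      exact hvi
  rw [hU, Set.ncard_coe_finset]
  rw [Finset.card_biUnion]
  · unfold FVal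
    apply Finset.sum_congr rfl
    intro i hi
    simp only [Finset.mem_Icc] at hi
    exact Fset_card np hi.1 (hbnd i hi.1 hi.2)
  · intro i hi j hj hij
    simp only [Finset.coe_Icc, Set.mem_Icc, Function.onFun] at hi hj ⊢
    rw [← Finset.disjoint_coe]
    rcases Nat.lt_or_ge i j with h | h
    · rw [← Sset_eq_Fset np hi.1 (hbnd i hi.1 hi.2), ← Sset_eq_Fset np hj.1 (hbnd j hj.1 hj.2)]
      exact Sset_disjoint np hi.1 h (hbnd i hi.1 hi.2) (hbnd j hj.1 hj.2) (hv.ge hi.1 (by omega) hj.2)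
    · have h' : j < i := by omega
      rw [← Sset_eq_Fset np hi.1 (hbnd i hi.1 hi.2), ← Sset_eq_Fset np hj.1 (hbnd j hj.1 hj.2)]
      exact (Sset_disjoint np hj.1 h' (hbnd j hj.1 hj.2) (hbnd i hi.1 hi.2) (hv.ge hj.1 (by omega) hi.2)).symm

section main
variable (Q Q' : ℕ →₀ ℕ) (a : ℕ)
variable (hder : ∀ m, Q' m = if m < a then Q m else Q (m+2))
  (hopt : ∀ c, 1 ≤ c → sVal Q c ≤ sVal Q a) (ha : 1 ≤ a)

lemma sum_splitIcc (f : ℕ → ℕ) {u t n : ℕ} (h1 : u ≤ t + 1) (h2 : t ≤ n) :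
    (∑ i ∈ Finset.Icc u n, f i) = (∑ i ∈ Finset.Icc u t, f i) + ∑ i ∈ Finset.Icc (t+1) n, f i := by
  rw [← Finset.Ico_add_one_right_eq_Icc u n, ← Finset.Ico_add_one_right_eq_Icc u t, ← Finset.Ico_add_one_right_eq_Icc (t+1) n]
  exact (Finset.sum_Ico_consecutive _ h1 (by omega)).symm

lemma sum_shift (f : ℕ → ℕ) (u v : ℕ) :
    (∑ i ∈ Finset.Icc (u+1) (v+1), f i) = ∑ i ∈ Finset.Icc u v, f (i+1) := by
  rw [← Finset.map_add_right_Icc u v 1, Finset.sum_map]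
  rfl

include hder hopt ha

lemma lower {r : ℕ} (b' : ℕ → ℕ) (hb' : ValidSeq b' r) :
    ∃ b, ValidSeq b (r+1) ∧ sVal Q a + FVal Q' b' r ≤ FVal Q b (r+1) := by
  classical
  set t' := Nat.findGreatest (fun i => 1 ≤ i ∧ b' i + 2 ≤ a) r with ht'def
  have hiff := (Nat.findGreatest_eq_iff (P := fun i => 1 ≤ i ∧ b' i + 2 ≤ a)
    (k := r) (m := t')).1 ht'def.symm
  have ht'r : t' ≤ r := hiff.1
  have hlow : ∀ i, 1 ≤ i → i ≤ t' → b' i + 2 ≤ a := by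
    intro i h1 h2
    have hspec := hiff.2.1 (by omega)
    have := hb'.ge h1 h2 ht'r
    omega
  have hhigh : ∀ i, t' < i → i ≤ r → a - 1 ≤ b' i := by
    intro i hi hir
    have := hiff.2.2 hi hir
    omega
  have ht'a : 2*t' + 1 ≤ a := by
    rcases Nat.eq_zero_or_pos t' with h | h
    · omega
    · have h1 := hlow t' h le_rfl
      have h2 := hb'.lb h ht'r
      omega
  by_cases hcase : t' < r ∧ b' (t'+1) = a - 1
  · -- case beta
    obtain ⟨htr, hb1⟩ := hcase
    have ha2 : 2*t' + 2 ≤ a := by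
      have := hb'.lb (show 1 ≤ t'+1 by omega) (by omega)
      omega
    set b : ℕ → ℕ := fun i => if i ≤ t' + 1 then b' i else if i = t' + 2 then a + 1 else b' (i-1) + 2 with hbdef
    have hbL : ∀ i, i ≤ t' + 1 → b i = b' i := by
      intro i h; simp only [hbdef]; rw [if_pos h]
    have hbM : b (t'+2) = a + 1 := by
      simp [hbdef]
    have hbH : ∀ i, t' + 3 ≤ i → b i = b' (i-1) + 2 := by
      intro i h; simp only [hbdef]; rw [if_neg (by omega), if_neg (by omega)]
    refine ⟨b, ⟨?_, ?_⟩, ?_⟩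
    · intro i h1 h2
      rcases Nat.lt_or_ge i (t'+2) with h | h
      · rw [hbL i (by omega)]; exact hb'.1 i h1 (by omega)
      · rcases Nat.eq_or_lt_of_le h with h' | h'
        · rw [← h', hbM]; omega
        · rw [hbH i (by omega)]; omega
    · intro i h1 h2
      rcases Nat.lt_or_ge i (t'+1) with h | h
      · rw [hbL i (by omega), hbL (i+1) (by omega)]
        exact hb'.2 i h1 (by omega)
      · rcases Nat.eq_or_lt_of_le h with h' | h'
        · rw [← h', hbL (t'+1) le_rfl, show t'+1+1 = t'+2 from rfl, hbM, hb1]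
          omega
        · rcases Nat.eq_or_lt_of_le h' with h'' | h''
          · have hi2 : i = t' + 2 := by omega
            rw [hi2, hbM, hbH (t'+2+1) (by omega), show t'+2+1-1 = t'+2 from rfl]
            have h3 := hb'.2 (t'+1) (by omega) (by omega)
            rw [show t'+1+1 = t'+2 from rfl] at h3
            omega
          · rw [hbH i (by omega), hbH (i+1) (by omega), show i + 1 - 1 = i by omega]
            have h3 := hb'.2 (i-1) (by omega) (by omega)
            have h4 : i - 1 + 1 = i := by omega
            rw [h4] at h3
            omega
    · -- sums
      unfold FVal
      rw [sum_splitIcc _ (show (1:ℕ) ≤ t' + 1 by omega) (show t' ≤ r + 1 by omega),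
        sum_splitIcc (u := t'+1) _ (by omega) (show t' + 1 ≤ r + 1 by omega),
        sum_splitIcc (u := t'+2) _ (by omega) (show t' + 2 ≤ r + 1 by omega),
        Finset.Icc_self, Finset.sum_singleton, Finset.Icc_self, Finset.sum_singleton]
      rw [sum_splitIcc (f := fun i => wVal Q' i (b' i)) (show (1:ℕ) ≤ t' + 1 by omega) (show t' ≤ r by omega),
        sum_splitIcc (f := fun i => wVal Q' i (b' i)) (u := t'+1) (by omega) (show t' + 1 ≤ r by omega),
        Finset.Icc_self, Finset.sum_singleton]
      simp only [show t'+1+1 = t'+2 from rfl]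
      have S1 : (∑ i ∈ Finset.Icc 1 t', wVal Q i (b i))
          = (∑ i ∈ Finset.Icc 1 t', wVal Q' i (b' i)) + 2*t'*(Q a + Q (a+1)) := by
        have : ∀ i ∈ Finset.Icc 1 t', wVal Q i (b i) = wVal Q' i (b' i) + 2*(Q a + Q (a+1)) := by
          intro i hi
          simp only [Finset.mem_Icc] at hi
          rw [hbL i (by omega)]
          exact lemE2 Q Q' a hder (hlow i hi.1 hi.2) (by
            have := hb'.lb hi.1 (by omega); omega)
        rw [Finset.sum_congr rfl this, Finset.sum_add_distrib, Finset.sum_const,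
          Nat.card_Icc, smul_eq_mul]
        have : t' + 1 - 1 = t' := by omega
        rw [this]
        ring
      have S4 : (∑ i ∈ Finset.Icc (t'+2+1) (r+1), wVal Q i (b i))
          = ∑ i ∈ Finset.Icc (t'+2) r, wVal Q' i (b' i) := by
        rw [sum_shift]
        apply Finset.sum_congr rfl
        intro i hi
        simp only [Finset.mem_Icc] at hi
        rw [hbH (i+1) (by omega), show i + 1 - 1 = i by omega]
        have hbi : a ≤ b' i := by
          have h5 := hb'.ge (show 1 ≤ t'+1 by omega) (show t'+1 ≤ i by omega) hi.2
          omega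
        have hlb := hb'.lb (show 1 ≤ i by omega) hi.2
        exact (lemE1 Q Q' a hder hbi (by omega)).symm
      rw [S1, S4, hbL (t'+1) le_rfl, hbM, hb1]
      have hE4 := lemE4 Q Q' a hder (i := t'+1) (by omega) (by omega)
      rw [show t' + 1 - 1 = t' by omega, show t' + 1 + 1 = t' + 2 by omega] at hE4
      omega
  · -- case alpha
    have hup : t' < r → a ≤ b' (t'+1) := by
      intro h
      have h1 := hhigh (t'+1) (by omega) (by omega)
      omega
    set b : ℕ → ℕ := fun i => if i ≤ t' then b' i else if i = t' + 1 then a else b' (i-1) + 2 with hbdef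
    have hbL : ∀ i, i ≤ t' → b i = b' i := by
      intro i h; simp only [hbdef]; rw [if_pos h]
    have hbM : b (t'+1) = a := by
      simp [hbdef]
    have hbH : ∀ i, t' + 2 ≤ i → b i = b' (i-1) + 2 := by
      intro i h; simp only [hbdef]; rw [if_neg (by omega), if_neg (by omega)]
    refine ⟨b, ⟨?_, ?_⟩, ?_⟩
    · intro i h1 h2
      rcases Nat.lt_or_ge i (t'+1) with h | h
      · rw [hbL i (by omega)]; exact hb'.1 i h1 (by omega)
      · rcases Nat.eq_or_lt_of_le h with h' | h'
        · rw [← h', hbM]; omega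
        · rw [hbH i (by omega)]; omega
    · intro i h1 h2
      rcases Nat.lt_or_ge i t' with h | h
      · rw [hbL i (by omega), hbL (i+1) (by omega)]
        exact hb'.2 i h1 (by omega)
      · rcases Nat.eq_or_lt_of_le h with h' | h'
        · have hi2 : i = t' := by omega
          rw [hi2, hbL t' le_rfl, hbM]
          exact hlow t' (by omega) le_rfl
        · rcases Nat.eq_or_lt_of_le h' with h'' | h''
          · have hi2 : i = t' + 1 := by omega
            rw [hi2, hbM, hbH (t'+1+1) (by omega), show t'+1+1-1 = t'+1 from rfl]
            have := hup (by omega)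
            omega
          · rw [hbH i (by omega), hbH (i+1) (by omega), show i + 1 - 1 = i by omega]
            have h3 := hb'.2 (i-1) (by omega) (by omega)
            have h4 : i - 1 + 1 = i := by omega
            rw [h4] at h3
            omega
    · unfold FVal
      rw [sum_splitIcc _ (show (1:ℕ) ≤ t' + 1 by omega) (show t' ≤ r + 1 by omega),
        sum_splitIcc (u := t'+1) _ (by omega) (show t' + 1 ≤ r + 1 by omega),
        Finset.Icc_self, Finset.sum_singleton]
      rw [sum_splitIcc (f := fun i => wVal Q' i (b' i)) (show (1:ℕ) ≤ t' + 1 by omega) (show t' ≤ r by omega)]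
      have S1 : (∑ i ∈ Finset.Icc 1 t', wVal Q i (b i))
          = (∑ i ∈ Finset.Icc 1 t', wVal Q' i (b' i)) + 2*t'*(Q a + Q (a+1)) := by
        have : ∀ i ∈ Finset.Icc 1 t', wVal Q i (b i) = wVal Q' i (b' i) + 2*(Q a + Q (a+1)) := by
          intro i hi
          simp only [Finset.mem_Icc] at hi
          rw [hbL i (by omega)]
          exact lemE2 Q Q' a hder (hlow i hi.1 hi.2) (by
            have := hb'.lb hi.1 (by omega); omega)
        rw [Finset.sum_congr rfl this, Finset.sum_add_distrib, Finset.sum_const,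
          Nat.card_Icc, smul_eq_mul]
        have : t' + 1 - 1 = t' := by omega
        rw [this]
        ring
      have S4 : (∑ i ∈ Finset.Icc (t'+1+1) (r+1), wVal Q i (b i))
          = ∑ i ∈ Finset.Icc (t'+1) r, wVal Q' i (b' i) := by
        rw [sum_shift]
        apply Finset.sum_congr rfl
        intro i hi
        simp only [Finset.mem_Icc] at hi
        rw [hbH (i+1) (by omega), show i + 1 - 1 = i by omega]
        have hbi : a ≤ b' i := by
          have h5 := hb'.ge (show 1 ≤ t'+1 by omega) (show t'+1 ≤ i by omega) hi.2
          have h6 := hup (by omega)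
          omega
        have hlb := hb'.lb (show 1 ≤ i by omega) hi.2
        exact (lemE1 Q Q' a hder hbi (by omega)).symm
      rw [S1, S4, hbM]
      have hEwA := lemEwA Q a (i := t'+1) (by omega) (by omega)
      rw [show t' + 1 - 1 = t' by omega] at hEwA
      omega

lemma upper {r : ℕ} (b : ℕ → ℕ) (hb : ValidSeq b (r+1)) :
    ∃ b', ValidSeq b' r ∧ FVal Q b (r+1) ≤ sVal Q a + FVal Q' b' r := by
  classical
  set t := Nat.findGreatest (fun i => 1 ≤ i ∧ b i ≤ a + 1) (r+1) with htdef
  have hiff := (Nat.findGreatest_eq_iff (P := fun i => 1 ≤ i ∧ b i ≤ a + 1)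
    (k := r+1) (m := t)).1 htdef.symm
  have htr : t ≤ r + 1 := hiff.1
  have hlow : ∀ i, 1 ≤ i → i ≤ t → b i ≤ a + 1 := by
    intro i h1 h2
    have hspec := hiff.2.1 (by omega)
    have := hb.ge h1 h2 htr
    omega
  have hhigh : ∀ i, t < i → i ≤ r + 1 → a + 2 ≤ b i := by
    intro i hi hir
    have h2 := hiff.2.2 hi hir
    have h3 := hb.1 i (by omega) hir
    omega
  rcases Nat.eq_zero_or_pos t with ht0 | htpos
  · -- t = 0 : all b i ≥ a + 2
    set b' : ℕ → ℕ := fun i => b (i+1) - 2 with hb'def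
    have hbv : ∀ i, b' i = b (i+1) - 2 := fun i => rfl
    refine ⟨b', ⟨?_, ?_⟩, ?_⟩
    · intro i h1 h2
      rw [hbv i]
      have := hhigh (i+1) (by omega) (by omega)
      omega
    · intro i h1 h2
      rw [hbv i, hbv (i+1)]
      have h3 := hb.2 (i+1) (by omega) (by omega)
      have h4 := hhigh (i+1) (by omega) (by omega)
      have h5 := hhigh (i+1+1) (by omega) (by omega)
      omega
    · unfold FVal
      rw [sum_splitIcc _ (show (1:ℕ) ≤ 1 + 1 by omega) (show 1 ≤ r + 1 by omega),
        Finset.Icc_self, Finset.sum_singleton]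
      have S4 : (∑ i ∈ Finset.Icc (1+1) (r+1), wVal Q i (b i))
          = ∑ i ∈ Finset.Icc 1 r, wVal Q' i (b' i) := by
        rw [sum_shift]
        apply Finset.sum_congr rfl
        intro i hi
        simp only [Finset.mem_Icc] at hi
        rw [hbv i]
        have h4 := hhigh (i+1) (by omega) (by omega)
        have hlb := hb.lb (show 1 ≤ i + 1 by omega) (by omega)
        have h6 : b (i+1) - 2 + 2 = b (i+1) := by omega
        rw [← h6, ← lemE1 Q Q' a hder (by omega) (by omega), h6]
      rw [S4, wVal_one]
      have := hopt (b 1) (hb.1 1 le_rfl (by omega))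
      omega
  · -- t ≥ 1
    set b' : ℕ → ℕ := fun i => if i ≤ t - 1 then b i else b (i+1) - 2 with hbdef
    have hbL : ∀ i, i ≤ t - 1 → b' i = b i := by
      intro i h; simp only [hbdef]; rw [if_pos h]
    have hbH : ∀ i, t ≤ i → b' i = b (i+1) - 2 := by
      intro i h; simp only [hbdef]; rw [if_neg (by omega)]
    have hvalid : ValidSeq b' r := by
      constructor
      · intro i h1 h2
        rcases Nat.lt_or_ge i t with h | h
        · rw [hbL i (by omega)]; exact hb.1 i h1 (by omega)
        · rw [hbH i h]
          have := hhigh (i+1) (by omega) (by omega)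
          omega
      · intro i h1 h2
        rcases Nat.lt_or_ge (i+1) t with h | h
        · rw [hbL i (by omega), hbL (i+1) (by omega)]
          exact hb.2 i h1 (by omega)
        · rcases Nat.eq_or_lt_of_le h with h' | h'
          · -- i + 1 = t : junction
            rw [hbL i (by omega), hbH (i+1) (by omega)]
            have h3 := hb.2 i h1 (by omega)
            have h4 := hb.2 (i+1) (by omega) (by omega)
            omega
          · rw [hbH i (by omega), hbH (i+1) (by omega)]
            have h3 := hb.2 (i+1) (by omega) (by omega)
            have h4 := hhigh (i+1) (by omega) (by omega)
            have h5 := hhigh (i+2) (by omega) (by omega)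
            omega
    refine ⟨b', hvalid, ?_⟩
    have hta : 2*(t-1) ≤ a := by
      have h1 := hb.lb htpos htr
      have h2 := hlow t htpos le_rfl
      omega
    have hSH : (∑ i ∈ Finset.Icc (t+1) (r+1), wVal Q i (b i))
        = ∑ i ∈ Finset.Icc t r, wVal Q' i (b' i) := by
      rw [sum_shift]
      apply Finset.sum_congr rfl
      intro i hi
      simp only [Finset.mem_Icc] at hi
      rw [hbH i hi.1]
      have h4 := hhigh (i+1) (by omega) (by omega)
      have hlb := hb.lb (show 1 ≤ i + 1 by omega) (by omega)
      have h6 : b (i+1) - 2 + 2 = b (i+1) := by omega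
      rw [← h6, ← lemE1 Q Q' a hder (by omega) (by omega), h6]
    by_cases hcase : 2 ≤ t ∧ b (t-1) = a - 1
    · -- subcase B
      obtain ⟨ht2, hbt1⟩ := hcase
      have hbt : b t = a + 1 := by
        have h1 := hb.2 (t-1) (by omega) (by omega)
        have h2 : t - 1 + 1 = t := by omega
        rw [h2] at h1
        have h3 := hlow t htpos le_rfl
        have h4 := hb.lb (show 1 ≤ t - 1 by omega) (by omega)
        omega
      have haB : 2*(t-1) ≤ a := hta
      have ha2 : 2*(t-1) ≤ a := hta
      -- split LHS at t-2, t-1, t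
      unfold FVal
      rw [show r + 1 = r + 1 from rfl]
      rw [sum_splitIcc _ (show (1:ℕ) ≤ t - 2 + 1 by omega) (show t - 2 ≤ r + 1 by omega),
        sum_splitIcc (u := t-2+1) _ (by omega) (show t - 2 + 1 ≤ r + 1 by omega),
        sum_splitIcc (u := t-2+1+1) _ (by omega) (show t - 2 + 1 + 1 ≤ r + 1 by omega),
        Finset.Icc_self, Finset.sum_singleton, Finset.Icc_self, Finset.sum_singleton]
      rw [sum_splitIcc (f := fun i => wVal Q' i (b' i)) (show (1:ℕ) ≤ t - 2 + 1 by omega) (show t - 2 ≤ r by omega),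
        sum_splitIcc (f := fun i => wVal Q' i (b' i)) (u := t-2+1) (by omega) (show t - 2 + 1 ≤ r by omega),
        Finset.Icc_self, Finset.sum_singleton]
      simp only [show t - 2 + 1 = t - 1 by omega]
      simp only [show t - 1 + 1 = t by omega]
      have S1 : (∑ i ∈ Finset.Icc 1 (t-2), wVal Q i (b i))
          = (∑ i ∈ Finset.Icc 1 (t-2), wVal Q' i (b i)) + 2*(t-2) * (Q a + Q (a+1)) := by
        have hterm : ∀ i ∈ Finset.Icc 1 (t-2), wVal Q i (b i) = wVal Q' i (b i) + 2*(Q a + Q (a+1)) := by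
          intro i hi
          simp only [Finset.mem_Icc] at hi
          have h8 := hb.ge hi.1 (show i ≤ t - 1 by omega) (by omega)
          have h9 := hb.lb hi.1 (by omega)
          exact lemE2 Q Q' a hder (by omega) (by omega)
        rw [Finset.sum_congr rfl hterm, Finset.sum_add_distrib, Finset.sum_const,
          Nat.card_Icc, smul_eq_mul, show t - 2 + 1 - 1 = t - 2 by omega]
        ring
      have S1' : (∑ i ∈ Finset.Icc 1 (t-2), wVal Q' i (b' i))
          = ∑ i ∈ Finset.Icc 1 (t-2), wVal Q' i (b i) := by
        apply Finset.sum_congr rfl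
        intro i hi
        simp only [Finset.mem_Icc] at hi
        rw [hbL i (by omega)]
      rw [S1, S1', hSH, hbt1, hbt, hbL (t-1) le_rfl, hbt1]
      have hE4 := lemE4 Q Q' a hder (i := t-1) (by omega) (by omega)
      rw [show t - 1 + 1 = t by omega, show t - 1 - 1 = t - 2 by omega] at hE4
      omega
    · -- subcase A
      have hlowA : ∀ i, 1 ≤ i → i ≤ t - 1 → b i + 2 ≤ a := by
        intro i h1 h2
        have h3 := hb.ge h1 h2 (show t - 1 ≤ r + 1 by omega)
        have h4 : b (t-1) + 2 ≤ b t := by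
          have := hb.2 (t-1) (by omega) (by omega)
          rwa [show t - 1 + 1 = t by omega] at this
        have h5 := hlow t htpos le_rfl
        have h6 : ¬ (2 ≤ t ∧ b (t-1) = a - 1) := hcase
        have h7 := hb.ge h1 h2 (show t - 1 ≤ r + 1 by omega)
        -- i ≤ t-1 implies t ≥ 2
        have ht2 : 2 ≤ t := by omega
        have h8 : b (t-1) ≤ a - 2 := by
          rcases Nat.lt_or_ge (b (t-1)) (a-1) with h | h
          · omega
          · have h9 := hb.1 (t-1) (by omega) (by omega)
            omega
        omega
      unfold FVal
      rw [sum_splitIcc _ (show (1:ℕ) ≤ t - 1 + 1 by omega) (show t - 1 ≤ r + 1 by omega),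
        sum_splitIcc (u := t-1+1) _ (by omega) (show t - 1 + 1 ≤ r + 1 by omega),
        Finset.Icc_self, Finset.sum_singleton]
      rw [sum_splitIcc (f := fun i => wVal Q' i (b' i)) (show (1:ℕ) ≤ t - 1 + 1 by omega) (show t - 1 ≤ r by omega)]
      have e1 : t - 1 + 1 = t := by omega
      rw [e1]
      have S1 : (∑ i ∈ Finset.Icc 1 (t-1), wVal Q i (b i))
          = (∑ i ∈ Finset.Icc 1 (t-1), wVal Q' i (b' i)) + 2*(t-1) * (Q a + Q (a+1)) := by
        have hterm : ∀ i ∈ Finset.Icc 1 (t-1), wVal Q i (b i) = wVal Q' i (b' i) + 2*(Q a + Q (a+1)) := by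
          intro i hi
          simp only [Finset.mem_Icc] at hi
          rw [hbL i hi.2]
          have h9 := hb.lb hi.1 (by omega)
          exact lemE2 Q Q' a hder (hlowA i hi.1 hi.2) (by omega)
        rw [Finset.sum_congr rfl hterm, Finset.sum_add_distrib, Finset.sum_const,
          Nat.card_Icc, smul_eq_mul, show t - 1 + 1 - 1 = t - 1 by omega]
        ring
      rw [S1, hSH]
      have hstar := star_w Q a hopt ha (t := t) (c := b t) htpos
        (by have := hb.lb htpos htr; omega) (hlow t htpos le_rfl) hta
      omega

end main

lemma num_main : ∀ (r : ℕ) (Ps : ℕ → ℕ →₀ ℕ) (aa : ℕ → ℕ),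
    (∀ i, 1 ≤ i → i ≤ r → OptimalFor (Ps i) (aa i) ∧
        ∀ m, Ps (i+1) m = if m < aa i then Ps i m else Ps i (m+2)) →
    (∀ b, ValidSeq b r → FVal (Ps 1) b r ≤ ∑ i ∈ Finset.Icc 1 r, sVal (Ps i) (aa i)) ∧
    (∃ b, ValidSeq b r ∧ (∑ i ∈ Finset.Icc 1 r, sVal (Ps i) (aa i)) ≤ FVal (Ps 1) b r) := by
  intro r
  induction r with
  | zero =>
    intro Ps aa _
    constructor
    · intro b _
      simp [FVal]
    · exact ⟨fun _ => 1, ⟨fun i h1 h2 => by omega, fun i h1 h2 => by omega⟩, by simp [FVal]⟩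
  | succ r ih =>
    intro Ps aa hproc
    have h1 := hproc 1 le_rfl (by omega)
    have hder1 := h1.2
    have hopt1 := h1.1
    have IH := ih (fun i => Ps (i+1)) (fun i => aa (i+1)) (by
      intro i hi1 hi2
      exact hproc (i+1) (by omega) (by omega))
    have hsum : (∑ i ∈ Finset.Icc 1 (r+1), sVal (Ps i) (aa i))
        = sVal (Ps 1) (aa 1) + ∑ i ∈ Finset.Icc 1 r, sVal (Ps (i+1)) (aa (i+1)) := by
      rw [sum_splitIcc _ (show (1:ℕ) ≤ 1 + 1 by omega) (show 1 ≤ r + 1 by omega),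
        Finset.Icc_self, Finset.sum_singleton, sum_shift]
    constructor
    · intro b hb
      obtain ⟨b', hb', hle⟩ := upper (Ps 1) (Ps 2) (aa 1) hder1 hopt1.2 hopt1.1 b hb
      have h2 := IH.1 b' hb'
      rw [hsum]
      calc FVal (Ps 1) b (r+1) ≤ sVal (Ps 1) (aa 1) + FVal (Ps 2) b' r := hle
      _ ≤ sVal (Ps 1) (aa 1) + ∑ i ∈ Finset.Icc 1 r, sVal (Ps (i+1)) (aa (i+1)) := by
          exact Nat.add_le_add_left h2 _
    · obtain ⟨b', hb', hge⟩ := IH.2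
      obtain ⟨b, hb, h⟩ := lower (Ps 1) (Ps 2) (aa 1) hder1 hopt1.2 hopt1.1 b' hb'
      refine ⟨b, hb, ?_⟩
      rw [hsum]
      calc sVal (Ps 1) (aa 1) + ∑ i ∈ Finset.Icc 1 r, sVal (Ps (i+1)) (aa (i+1))
          ≤ sVal (Ps 1) (aa 1) + FVal (Ps 2) b' r := Nat.add_le_add_left hge _
      _ ≤ FVal (Ps 1) b (r+1) := h


/-- Theorem 2.7: for a `U`-process `(P_1,…,P_{r+1}; a_1,…,a_r)` for `P`,
`Σ_{i=1}^r s(P_i, a_i) = u_r(P)`, the maximum cardinality of an `r`-`U`-chain in `D_P`. -/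
theorem uprocess_sum_eq_uMax
    (n : ℕ) (hn : 0 < n) (np : ℕ →₀ ℕ) (hP : IsPartitionOf n np)
    (r : ℕ) (Ps : ℕ → ℕ →₀ ℕ) (aa : ℕ → ℕ) (hproc : IsUProcess r np Ps aa) :
    ∑ i ∈ Finset.Icc 1 r, sVal (Ps i) (aa i) = uMax np r := by
  obtain ⟨hP1, hstep⟩ := hproc
  have hmain := num_main r Ps aa hstep
  subst hP1
  unfold uMax
  set S := {m | ∃ b : ℕ → ℕ, ValidSeq b r ∧ (UChain (Ps 1) b r).ncard = m} with hS
  have hub : ∀ m ∈ S, m ≤ ∑ i ∈ Finset.Icc 1 r, sVal (Ps i) (aa i) := by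
    rintro m ⟨b, hb, hm⟩
    rw [← hm, UChain_ncard (Ps 1) hb]
    exact hmain.1 b hb
  have hmem : (∑ i ∈ Finset.Icc 1 r, sVal (Ps i) (aa i)) ∈ S := by
    obtain ⟨b, hb, hge⟩ := hmain.2
    refine ⟨b, hb, ?_⟩
    rw [UChain_ncard (Ps 1) hb]
    exact le_antisymm (hmain.1 b hb) hge
  exact le_antisymm (le_csSup ⟨_, hub⟩ hmem) (csSup_le' hub)
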